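/- Let d = 2 and V(x) = a·x₁/⟨x⟩² for x = (x₁,x₂) ∈ ℝ², where a ∈ ℝ. Then for any unit vector ξ ∈ ℝ² and x ⊥ ξ, ∫_{-∞}^{∞} (V(x + tξ) − V(tξ)) dt = aπ·x₁/⟨x⟩. -/
import Mathlib


open MeasureTheory Real
open scoped RealInnerProductSpace

lemma aux_key_eq {c : ℝ} (hc : 0 < c) (t : ℝ) :
    (c + t ^ 2)⁻¹ = c⁻¹ * (1 + (t / Real.sqrt c) ^ 2)⁻¹ := by
  have hcs : Real.sqrt c ^ 2 = c := Real.sq_sqrt hc.le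
  rw [div_pow, hcs, ← mul_inv]
  congr 1
  field_simp

lemma aux_integrable_inv_const_add_sq {c : ℝ} (hc : 0 < c) :
    Integrable (fun t : ℝ => (c + t ^ 2)⁻¹) := by
  have hs : Real.sqrt c ≠ 0 := by positivity
  have h := (integrable_inv_one_add_sq.comp_div hs).const_mul c⁻¹
  refine h.congr ?_
  filter_upwards with t
  exact (aux_key_eq hc t).symm

lemma aux_integral_inv_const_add_sq {c : ℝ} (hc : 0 < c) :
    ∫ t : ℝ, (c + t ^ 2)⁻¹ = π / Real.sqrt c := by
  have hs : (0:ℝ) < Real.sqrt c := Real.sqrt_pos.mpr hc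
  have hcs : Real.sqrt c ^ 2 = c := Real.sq_sqrt hc.le
  have key := aux_key_eq hc
  calc ∫ t : ℝ, (c + t ^ 2)⁻¹
      = ∫ t : ℝ, c⁻¹ * (1 + (t / Real.sqrt c) ^ 2)⁻¹ := by simp_rw [key]
    _ = c⁻¹ * ∫ t : ℝ, (1 + (t / Real.sqrt c) ^ 2)⁻¹ := integral_const_mul _ _
    _ = c⁻¹ * (|Real.sqrt c| • ∫ t : ℝ, (1 + t ^ 2)⁻¹) := by
        rw [MeasureTheory.Measure.integral_comp_div (fun u : ℝ => (1 + u ^ 2)⁻¹) (Real.sqrt c)]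
    _ = π / Real.sqrt c := by
        rw [integral_univ_inv_one_add_sq, abs_of_pos hs, smul_eq_mul]
        rw [eq_div_iff hs.ne',
          show c⁻¹ * (Real.sqrt c * π) * Real.sqrt c = c⁻¹ * (Real.sqrt c * Real.sqrt c) * π
            by ring, Real.mul_self_sqrt hc.le, inv_mul_cancel₀ hc.ne', one_mul]

lemma aux_integral_odd_eq_zero {f : ℝ → ℝ} (hf : Integrable f) (hodd : ∀ t, f (-t) = -f t) :
    ∫ t : ℝ, f t = 0 := by
  have h1 : ∫ t : ℝ, f (-t) = ∫ t : ℝ, f t := integral_neg_eq_self f volume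
  have h2 : ∫ t : ℝ, f (-t) = -∫ t : ℝ, f t := by
    simp_rw [hodd]; exact integral_neg f
  linarith

theorem stmt_9 (a : ℝ) (V : EuclideanSpace ℝ (Fin 2) → ℝ)
    (hV : ∀ x : EuclideanSpace ℝ (Fin 2), V x = a * x 0 / (1 + ‖x‖ ^ 2))
    (ξ x : EuclideanSpace ℝ (Fin 2)) (hξ : ‖ξ‖ = 1) (hperp : ⟪x, ξ⟫ = 0) :
    ∫ t : ℝ, (V (x + t • ξ) - V (t • ξ))
      = a * π * x 0 / Real.sqrt (1 + ‖x‖ ^ 2) := by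
  set c : ℝ := 1 + ‖x‖ ^ 2 with hcdef
  have hc : (0:ℝ) < c := by positivity
  have hc1 : (1:ℝ) ≤ c := by nlinarith [sq_nonneg ‖x‖]
  -- norm computation
  have hnorm : ∀ t : ℝ, ‖x + t • ξ‖ ^ 2 = ‖x‖ ^ 2 + t ^ 2 := by
    intro t
    rw [norm_add_sq_real, real_inner_smul_right, hperp, norm_smul, hξ]
    simp [mul_pow, abs_of_nonneg, sq_abs]
  have hnormt : ∀ t : ℝ, ‖t • ξ‖ ^ 2 = t ^ 2 := by
    intro t; rw [norm_smul, hξ]; simp [mul_pow, sq_abs]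
  have happ : ∀ t : ℝ, (x + t • ξ) 0 = x 0 + t * ξ 0 := by
    intro t; simp [PiLp.add_apply, PiLp.smul_apply, smul_eq_mul]
  have happt : ∀ t : ℝ, (t • ξ) 0 = t * ξ 0 := by
    intro t; simp [PiLp.smul_apply, smul_eq_mul]
  -- rewrite integrand
  have hpos1 : ∀ t : ℝ, (0:ℝ) < c + t ^ 2 := fun t => by positivity
  have hpos2 : ∀ t : ℝ, (0:ℝ) < 1 + t ^ 2 := fun t => by positivity
  have hint_eq : ∀ t : ℝ, V (x + t • ξ) - V (t • ξ)
      = a * x 0 * (c + t ^ 2)⁻¹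
        + (a * ξ 0 * (1 - c)) * (t * ((c + t ^ 2)⁻¹ * (1 + t ^ 2)⁻¹)) := by
    intro t
    rw [hV, hV, happ, happt, hnorm, hnormt]
    have h1 := (hpos1 t).ne'
    have h2 := (hpos2 t).ne'
    rw [show 1 + (‖x‖ ^ 2 + t ^ 2) = c + t ^ 2 by rw [hcdef]; ring]
    field_simp
    ring
  have hInt1 : Integrable (fun t : ℝ => a * x 0 * (c + t ^ 2)⁻¹) :=
    (aux_integrable_inv_const_add_sq hc).const_mul _
  have hg : Integrable (fun t : ℝ => t * ((c + t ^ 2)⁻¹ * (1 + t ^ 2)⁻¹)) := by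
    refine (integrable_inv_one_add_sq.const_mul (2 * Real.sqrt c)⁻¹).mono' ?_ ?_
    · apply Measurable.aestronglyMeasurable
      fun_prop
    · filter_upwards with t
      have h1 := hpos1 t
      have h2 := hpos2 t
      rw [Real.norm_eq_abs, abs_mul, abs_mul, abs_inv, abs_inv,
        abs_of_pos h1, abs_of_pos h2]
      have hs : (0:ℝ) < Real.sqrt c := Real.sqrt_pos.mpr hc
      have h2s : 2 * Real.sqrt c * |t| ≤ c + t ^ 2 := by
        nlinarith [sq_nonneg (Real.sqrt c - |t|), Real.sq_sqrt hc.le, sq_abs t]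
      have hb : |t| * (c + t ^ 2)⁻¹ ≤ (2 * Real.sqrt c)⁻¹ := by
        rw [mul_inv_le_iff₀ h1]
        calc |t| = (2 * Real.sqrt c)⁻¹ * (2 * Real.sqrt c * |t|) := by field_simp
          _ ≤ (2 * Real.sqrt c)⁻¹ * (c + t ^ 2) :=
            mul_le_mul_of_nonneg_left h2s (by positivity)
      calc |t| * ((c + t ^ 2)⁻¹ * (1 + t ^ 2)⁻¹)
          = (|t| * (c + t ^ 2)⁻¹) * (1 + t ^ 2)⁻¹ := by ring
        _ ≤ (2 * Real.sqrt c)⁻¹ * (1 + t ^ 2)⁻¹ := by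
            apply mul_le_mul_of_nonneg_right hb (by positivity)
  have hInt2 : Integrable (fun t : ℝ => (a * ξ 0 * (1 - c)) * (t * ((c + t ^ 2)⁻¹ * (1 + t ^ 2)⁻¹))) :=
    hg.const_mul _
  have hodd : ∫ t : ℝ, t * ((c + t ^ 2)⁻¹ * (1 + t ^ 2)⁻¹) = 0 := by
    apply aux_integral_odd_eq_zero hg
    intro t; simp [neg_mul]
  calc ∫ t : ℝ, (V (x + t • ξ) - V (t • ξ))
      = ∫ t : ℝ, (a * x 0 * (c + t ^ 2)⁻¹
        + (a * ξ 0 * (1 - c)) * (t * ((c + t ^ 2)⁻¹ * (1 + t ^ 2)⁻¹))) := by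
        simp_rw [hint_eq]
    _ = (∫ t : ℝ, a * x 0 * (c + t ^ 2)⁻¹)
        + ∫ t : ℝ, (a * ξ 0 * (1 - c)) * (t * ((c + t ^ 2)⁻¹ * (1 + t ^ 2)⁻¹)) :=
        integral_add hInt1 hInt2
    _ = a * x 0 * (π / Real.sqrt c) + (a * ξ 0 * (1 - c)) * 0 := by
        rw [integral_const_mul, integral_const_mul, aux_integral_inv_const_add_sq hc, hodd]
    _ = a * π * x 0 / Real.sqrt c := by ring
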